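/- Let p be a prime, d a positive divisor of p − 1, ζ₀ a generator of (ZMod p)ˣ, and set d₂ = ⌈√d⌉. For every x ∈ (ZMod p)ˣ there exist integers j, u₂, v₂ with 1 ≤ j ≤ (p − 1)/d, 0 ≤ u₂ ≤ d₂, and 0 ≤ v₂ ≤ d₂ − 1, such that x^d = (ζ₀^d)^j and x = ζ₀^{((p−1)/d)·(u₂·d₂ − v₂) + j}. (This is the exponent decomposition underlying the DLP-to-DHP reduction algorithm with auxiliary group (ZMod p)ˣ.) -/

import Mathlib

/-- Exponent decomposition underlying the DLP-to-DHP reduction with auxiliary group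
`(ZMod p)ˣ`: for a prime `p`, a generator `ζ₀` of `(ZMod p)ˣ`, a positive divisor `d`
of `p - 1`, and `d₂ = ⌈√d⌉`, every `x : (ZMod p)ˣ` admits integers `j, u₂, v₂` with
`1 ≤ j ≤ (p - 1) / d`, `0 ≤ u₂ ≤ d₂`, `0 ≤ v₂ ≤ d₂ - 1`, such that `x ^ d = (ζ₀ ^ d) ^ j`
and `x = ζ₀ ^ (((p - 1) / d) * (u₂ * d₂ - v₂) + j)`. -/
theorem reduction_exponent_decomposition
    (p : ℕ) (hp : p.Prime) (ζ₀ : (ZMod p)ˣ)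
    (hζ₀ : ∀ y : (ZMod p)ˣ, y ∈ Subgroup.zpowers ζ₀)
    (d : ℕ) (hd : 0 < d) (hdvd : d ∣ p - 1)
    (d₂ : ℕ) (hd₂ : d₂ = ⌈Real.sqrt d⌉₊) (x : (ZMod p)ˣ) :
    ∃ j u₂ v₂ : ℤ,
      1 ≤ j ∧ j ≤ (((p - 1) / d : ℕ) : ℤ) ∧
      0 ≤ u₂ ∧ u₂ ≤ (d₂ : ℤ) ∧ 0 ≤ v₂ ∧ v₂ ≤ (d₂ : ℤ) - 1 ∧
      x ^ d = (ζ₀ ^ d) ^ j ∧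
      x = ζ₀ ^ ((((p - 1) / d : ℕ) : ℤ) * (u₂ * d₂ - v₂) + j) := by
  haveI := Fact.mk hp
  -- basic notation
  have hn1 : 1 ≤ p - 1 := Nat.le_sub_one_of_lt hp.one_lt
  have hcard : Fintype.card (ZMod p)ˣ = p - 1 := ZMod.card_units p
  set N : ℤ := ((p - 1 : ℕ) : ℤ) with hN
  set M : ℤ := (((p - 1) / d : ℕ) : ℤ) with hM
  have hMpos : 0 < M := by
    have : 1 ≤ (p - 1) / d := (Nat.one_le_div_iff hd).2 (Nat.le_of_dvd hn1 hdvd)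
    rw [hM]; exact_mod_cast this
  have hdM : (d : ℤ) * M = N := by
    rw [hM, hN]
    exact_mod_cast congrArg (Nat.cast : ℕ → ℤ) (Nat.mul_div_cancel' hdvd)
  have hNpos : 0 < N := by rw [hN]; exact_mod_cast hn1
  have hone : ζ₀ ^ N = 1 := by
    rw [hN, zpow_natCast, ← hcard, pow_card_eq_one]
  have key : ∀ s t : ℤ, N ∣ s - t → ζ₀ ^ s = ζ₀ ^ t := by
    rintro s t ⟨c, hc⟩
    have hs : s = t + N * c := by linarith
    rw [hs, zpow_add, zpow_mul, hone, one_zpow, mul_one]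
  -- d₂ facts
  have hd2pos : 0 < (d₂ : ℤ) := by
    have : d₂ ≠ 0 := by
      rw [hd₂, Ne, Nat.ceil_eq_zero, not_le]
      exact Real.sqrt_pos.2 (by exact_mod_cast hd)
    omega
  have hdle : (d : ℤ) ≤ (d₂ : ℤ) * d₂ := by
    have h1 : Real.sqrt d ≤ (d₂ : ℝ) := by rw [hd₂]; exact Nat.le_ceil _
    have h0 : (0 : ℝ) ≤ Real.sqrt d := Real.sqrt_nonneg _
    have : (d : ℝ) ≤ (d₂ : ℝ) * d₂ := by
      calc (d : ℝ) = Real.sqrt d * Real.sqrt d := by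
            rw [Real.mul_self_sqrt (by positivity)]
        _ ≤ (d₂ : ℝ) * d₂ := mul_le_mul h1 h1 h0 (by positivity)
    exact_mod_cast this
  -- write x as a power of ζ₀
  obtain ⟨a, ha⟩ := Subgroup.mem_zpowers_iff.mp (hζ₀ x)
  -- normalize the exponent to e ∈ [1, N]
  set e : ℤ := (a - 1) % N + 1 with he
  have he1 : 1 ≤ e := by
    have := Int.emod_nonneg (a - 1) (ne_of_gt hNpos); omega
  have heN : e ≤ N := by
    have := Int.emod_lt_of_pos (a - 1) hNpos; omega
  have hxe : ζ₀ ^ e = x := by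
    rw [← ha]
    apply key
    have := Int.emod_add_mul_ediv (a - 1) N
    exact ⟨-((a - 1) / N), by linarith⟩
  -- divide: e = M * k + j, 1 ≤ j ≤ M, 0 ≤ k ≤ d - 1
  set k : ℤ := (e - 1) / M with hk
  set j : ℤ := (e - 1) % M + 1 with hj
  have hdiv : e = M * k + j := by
    have h := Int.emod_add_mul_ediv (e - 1) M
    rw [hk, hj]; linarith
  have hj1 : 1 ≤ j := by
    have := Int.emod_nonneg (e - 1) (ne_of_gt hMpos); omega
  have hjM : j ≤ M := by
    have := Int.emod_lt_of_pos (e - 1) hMpos; omega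
  have hk0 : 0 ≤ k := Int.ediv_nonneg (by omega) (le_of_lt hMpos)
  have hkd : k < (d : ℤ) := by
    by_contra h
    push_neg at h
    have : M * (d : ℤ) ≤ M * k := by
      exact mul_le_mul_of_nonneg_left h (le_of_lt hMpos)
    nlinarith [hdM]
  -- decompose k = u₂ * d₂ - v₂
  set v₂ : ℤ := (-k) % (d₂ : ℤ) with hv
  set u₂ : ℤ := -((-k) / (d₂ : ℤ)) with hu
  have hv0 : 0 ≤ v₂ := Int.emod_nonneg _ (ne_of_gt hd2pos)
  have hvlt : v₂ < (d₂ : ℤ) := Int.emod_lt_of_pos _ hd2pos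
  have hkeq : k = u₂ * (d₂ : ℤ) - v₂ := by
    have := Int.emod_add_mul_ediv (-k) (d₂ : ℤ)
    rw [hu, hv]; linarith
  have hu0 : 0 ≤ u₂ := by
    have : 0 ≤ u₂ * (d₂ : ℤ) := by omega
    exact le_of_mul_le_mul_right (by linarith) hd2pos
  have huD : u₂ ≤ (d₂ : ℤ) := by
    have h1 : u₂ * (d₂ : ℤ) = k + v₂ := by omega
    have h2 : u₂ * (d₂ : ℤ) < ((d₂ : ℤ) + 1) * d₂ := by nlinarith
    have := lt_of_mul_lt_mul_right h2 (le_of_lt hd2pos)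
    omega
  refine ⟨j, u₂, v₂, hj1, hjM, hu0, huD, hv0, by omega, ?_, ?_⟩
  · -- x ^ d = (ζ₀ ^ d) ^ j
    rw [← hxe]
    have h1 : (ζ₀ ^ e) ^ d = ζ₀ ^ (e * (d : ℤ)) := by
      rw [← zpow_natCast (ζ₀ ^ e) d, ← zpow_mul]
    have h2 : (ζ₀ ^ d) ^ j = ζ₀ ^ ((d : ℤ) * j) := by
      rw [← zpow_natCast ζ₀ d, ← zpow_mul]
    rw [h1, h2]
    apply key
    refine ⟨k, ?_⟩
    have : e * (d : ℤ) - (d : ℤ) * j = (d : ℤ) * M * k := by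
      rw [hdiv]; ring
    rw [this, hdM]
  · rw [← hxe, ← hkeq, ← hdiv]
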